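/- arXiv:1206.3499 — 2 statements merged into one kernel-verified Lean document; each statement's English description precedes it below -/
import Mathlib

section
/- Let Ω ⊆ ℝⁿ be open, let u : Ω → ℝ be a smooth solution of the minimal surface equation, and let η : Ω → ℝ be smooth. Set W = √(1+|∇u|²), gⁱʲ = δⁱʲ − ∂ᵢu ∂ⱼu / W², |A|² = W⁻² Σᵢⱼₖₗ gⁱᵏ gʲˡ ∂ᵢ∂ⱼu ∂ₖ∂ₗu, and h = η W. Then L h := Δˢh − 2 Σᵢⱼ gⁱʲ (∂ᵢW / W) ∂ⱼh = W (Δˢη + η |A|²) on Ω, where Δˢf = W⁻¹ Σᵢ ∂ᵢ(W Σⱼ gⁱʲ ∂ⱼf). -/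
open Real
open Finset

/-- The `i`-th partial derivative of a function on `ℝⁿ`. -/
noncomputable def pd {n : ℕ} (u : EuclideanSpace ℝ (Fin n) → ℝ) (i : Fin n)
    (x : EuclideanSpace ℝ (Fin n)) : ℝ :=
  fderiv ℝ u x (EuclideanSpace.single i 1)

/-- `W = √(1 + |∇u|²)`. -/
noncomputable def Wf {n : ℕ} (u : EuclideanSpace ℝ (Fin n) → ℝ)
    (x : EuclideanSpace ℝ (Fin n)) : ℝ :=
  Real.sqrt (1 + ∑ i, (pd u i x) ^ 2)

/-- The inverse metric `gⁱʲ = δⁱʲ − ∂ᵢu ∂ⱼu / W²` of the graph of `u`. -/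
noncomputable def ginv {n : ℕ} (u : EuclideanSpace ℝ (Fin n) → ℝ) (i j : Fin n)
    (x : EuclideanSpace ℝ (Fin n)) : ℝ :=
  (if i = j then (1 : ℝ) else 0) - pd u i x * pd u j x / (Wf u x) ^ 2

/-- The Laplace–Beltrami operator of the graph of `u` in divergence form:
`Δˢf = W⁻¹ Σᵢ ∂ᵢ(W Σⱼ gⁱʲ ∂ⱼf)`. -/
noncomputable def lapS {n : ℕ} (u f : EuclideanSpace ℝ (Fin n) → ℝ)
    (x : EuclideanSpace ℝ (Fin n)) : ℝ :=
  (Wf u x)⁻¹ * ∑ i, pd (fun y => Wf u y * ∑ j, ginv u i j y * pd f j y) i x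

/-- The squared norm of the second fundamental form of the graph of `u`:
`|A|² = W⁻² Σᵢⱼₖₗ gⁱᵏ gʲˡ ∂ᵢ∂ⱼu ∂ₖ∂ₗu`. -/
noncomputable def normA2 {n : ℕ} (u : EuclideanSpace ℝ (Fin n) → ℝ)
    (x : EuclideanSpace ℝ (Fin n)) : ℝ :=
  ((Wf u x) ^ 2)⁻¹ * ∑ i, ∑ j, ∑ k, ∑ l,
    ginv u i k x * ginv u j l x * pd (pd u j) i x * pd (pd u l) k x

/-- The operator `L h = Δˢh − 2 Σᵢⱼ gⁱʲ (∂ᵢW / W) ∂ⱼh`. -/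
noncomputable def Lop {n : ℕ} (u h : EuclideanSpace ℝ (Fin n) → ℝ)
    (x : EuclideanSpace ℝ (Fin n)) : ℝ :=
  lapS u h x - 2 * ∑ i, ∑ j, ginv u i j x * (pd (Wf u) i x / Wf u x) * pd h j x

/-- `Qf u i = ∑ⱼ uⱼ uⱼᵢ`; note `pd (Wf u) i = Qf u i / Wf u`. -/
noncomputable def Qf {n : ℕ} (u : EuclideanSpace ℝ (Fin n) → ℝ) (i : Fin n)
    (x : EuclideanSpace ℝ (Fin n)) : ℝ :=
  ∑ j, pd u j x * pd (pd u j) i x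

/-- `Pff u f = ∑ⱼ uⱼ fⱼ`. -/
noncomputable def Pff {n : ℕ} (u f : EuclideanSpace ℝ (Fin n) → ℝ)
    (x : EuclideanSpace ℝ (Fin n)) : ℝ :=
  ∑ j, pd u j x * pd f j x

namespace MSE
variable {n : ℕ} {Ω : Set (EuclideanSpace ℝ (Fin n))} {x : EuclideanSpace ℝ (Fin n)}
  {f g u : EuclideanSpace ℝ (Fin n) → ℝ} {i j : Fin n}

abbrev Sm (Ω : Set (EuclideanSpace ℝ (Fin n))) (f : EuclideanSpace ℝ (Fin n) → ℝ) : Prop :=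
  ContDiffOn ℝ (⊤ : ℕ∞) f Ω

theorem diffAt {F : Type*} [NormedAddCommGroup F] [NormedSpace ℝ F]
    {f : EuclideanSpace ℝ (Fin n) → F}
    (hΩ : IsOpen Ω) (hf : ContDiffOn ℝ (⊤ : ℕ∞) f Ω) (hx : x ∈ Ω) :
    DifferentiableAt ℝ f x :=
  (hf.contDiffAt (hΩ.mem_nhds hx)).differentiableAt (by simp)

theorem pd_congr (hΩ : IsOpen Ω) (h : Set.EqOn f g Ω) (hx : x ∈ Ω) :
    pd f i x = pd g i x := by
  unfold pd
  rw [Filter.EventuallyEq.fderiv_eq (Filter.eventuallyEq_of_mem (hΩ.mem_nhds hx) h)]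

theorem pd_add (hf : DifferentiableAt ℝ f x) (hg : DifferentiableAt ℝ g x) :
    pd (fun y => f y + g y) i x = pd f i x + pd g i x := by
  unfold pd; rw [fderiv_fun_add hf hg]; rfl

theorem pd_sub (hf : DifferentiableAt ℝ f x) (hg : DifferentiableAt ℝ g x) :
    pd (fun y => f y - g y) i x = pd f i x - pd g i x := by
  unfold pd; rw [fderiv_fun_sub hf hg]; rfl

theorem pd_mul (hf : DifferentiableAt ℝ f x) (hg : DifferentiableAt ℝ g x) :
    pd (fun y => f y * g y) i x = pd f i x * g x + f x * pd g i x := by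
  unfold pd; rw [fderiv_fun_mul hf hg]; simp; ring

theorem pd_const (c : ℝ) : pd (fun _ => c) i x = 0 := by
  unfold pd; simp

theorem pd_inv (hg : DifferentiableAt ℝ g x) (h0 : g x ≠ 0) :
    pd (fun y => (g y)⁻¹) i x = -pd g i x / g x ^ 2 := by
  unfold pd
  have h := (hasDerivAt_inv h0).comp_hasFDerivAt x hg.hasFDerivAt
  have e : (fun y => (g y)⁻¹) = (fun t : ℝ => t⁻¹) ∘ g := rfl
  rw [e, h.fderiv]
  simp [div_eq_mul_inv]
  ring

theorem pd_div (hf : DifferentiableAt ℝ f x) (hg : DifferentiableAt ℝ g x) (h0 : g x ≠ 0) :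
    pd (fun y => f y / g y) i x
      = (pd f i x * g x - f x * pd g i x) / g x ^ 2 := by
  have e : (fun y => f y / g y) = (fun y => f y * (g y)⁻¹) := by
    funext y; rw [div_eq_mul_inv]
  rw [e, pd_mul hf (hg.fun_inv h0), pd_inv hg h0]
  field_simp
  ring

theorem pd_sum {ι : Type*} (s : Finset ι) (A : ι → EuclideanSpace ℝ (Fin n) → ℝ)
    (h : ∀ a ∈ s, DifferentiableAt ℝ (A a) x) :
    pd (fun y => ∑ a ∈ s, A a y) i x = ∑ a ∈ s, pd (A a) i x := by
  unfold pd; rw [fderiv_fun_sum h]; simp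

theorem pd_sqrt (hf : DifferentiableAt ℝ f x) (h0 : 0 < f x) :
    pd (fun y => Real.sqrt (f y)) i x = pd f i x / (2 * Real.sqrt (f x)) := by
  unfold pd
  have h := (Real.hasDerivAt_sqrt (ne_of_gt h0)).comp_hasFDerivAt x hf.hasFDerivAt
  have e : (fun y => Real.sqrt (f y)) = (fun t => Real.sqrt t) ∘ f := rfl
  rw [e, h.fderiv]
  simp [div_eq_mul_inv]; ring

theorem cd_pd (hΩ : IsOpen Ω) (hf : Sm Ω f) : Sm Ω (pd f i) := by
  have h1 : ContDiffOn ℝ (⊤ : ℕ∞) (fderiv ℝ f) Ω := by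
    apply hf.fderiv_of_isOpen hΩ
    simp
  have : pd f i = fun x => (ContinuousLinearMap.apply ℝ ℝ (EuclideanSpace.single i 1))
      (fderiv ℝ f x) := rfl
  rw [this]
  exact (ContinuousLinearMap.apply ℝ ℝ (EuclideanSpace.single i 1)).contDiff.comp_contDiffOn h1

theorem pd_swap (hΩ : IsOpen Ω) (hf : Sm Ω f) (hx : x ∈ Ω) :
    pd (pd f j) i x = pd (pd f i) j x := by
  have hmem := hΩ.mem_nhds hx
  have h1 : ∀ᶠ y in nhds x, HasFDerivAt f (fderiv ℝ f y) y :=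
    Filter.eventually_of_mem hmem fun y hy => (diffAt hΩ hf hy).hasFDerivAt
  have hf' : ContDiffOn ℝ (⊤ : ℕ∞) (fderiv ℝ f) Ω := hf.fderiv_of_isOpen hΩ (by simp)
  have h2 : HasFDerivAt (fderiv ℝ f) (fderiv ℝ (fderiv ℝ f) x) x :=
    (diffAt hΩ hf' hx).hasFDerivAt
  have hsymm := second_derivative_symmetric_of_eventually h1 h2
  have key : ∀ v : EuclideanSpace ℝ (Fin n),
      fderiv ℝ (fun y => fderiv ℝ f y v) x = (fderiv ℝ (fderiv ℝ f) x).flip v := by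
    intro v
    have := fderiv_clm_apply (c := fderiv ℝ f) (u := fun _ => v)
      h2.differentiableAt (differentiableAt_const v)
    simpa using this
  have e1 : pd (pd f j) i x
      = fderiv ℝ (fderiv ℝ f) x (EuclideanSpace.single i 1) (EuclideanSpace.single j 1) := by
    show fderiv ℝ (fun y => fderiv ℝ f y (EuclideanSpace.single j 1)) x (EuclideanSpace.single i 1) = _
    rw [key]; rfl
  have e2 : pd (pd f i) j x
      = fderiv ℝ (fderiv ℝ f) x (EuclideanSpace.single j 1) (EuclideanSpace.single i 1) := by
    show fderiv ℝ (fun y => fderiv ℝ f y (EuclideanSpace.single i 1)) x (EuclideanSpace.single j 1) = _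
    rw [key]; rfl
  rw [e1, e2, hsymm]


section W
variable (u)

theorem sumsq_pos : (0:ℝ) < 1 + ∑ i, pd u i x ^ 2 := by positivity

theorem Wf_pos : 0 < Wf u x := Real.sqrt_pos.2 (sumsq_pos u)

theorem Wf_ne : Wf u x ≠ 0 := ne_of_gt (Wf_pos u)

theorem Wf_sq : Wf u x ^ 2 = 1 + ∑ i, pd u i x ^ 2 :=
  Real.sq_sqrt (le_of_lt (sumsq_pos u))

end W

theorem cd_inner (hΩ : IsOpen Ω) (hu : Sm Ω u) :
    Sm Ω (fun y => 1 + ∑ i, pd u i y ^ 2) := by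
  apply ContDiffOn.add contDiffOn_const
  exact ContDiffOn.sum fun i _ => (cd_pd hΩ hu).pow 2

theorem cd_Wf (hΩ : IsOpen Ω) (hu : Sm Ω u) : Sm Ω (Wf u) := by
  intro y hy
  have h1 := ((cd_inner hΩ hu) y hy).contDiffAt (hΩ.mem_nhds hy)
  exact ((contDiffAt_sqrt (ne_of_gt (sumsq_pos u))).comp y h1).contDiffWithinAt

theorem diff_pd (hΩ : IsOpen Ω) (hu : Sm Ω u) (hx : x ∈ Ω) :
    DifferentiableAt ℝ (pd u i) x :=
  diffAt hΩ (cd_pd hΩ hu) hx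

theorem pd_Wf (hΩ : IsOpen Ω) (hu : Sm Ω u) (hx : x ∈ Ω) :
    pd (Wf u) i x = (∑ j, pd u j x * pd (pd u j) i x) / Wf u x := by
  have e : Wf u = fun y => Real.sqrt (1 + ∑ j, pd u j y ^ 2) := rfl
  rw [e, pd_sqrt (diffAt hΩ (cd_inner hΩ hu) hx) (sumsq_pos u)]
  have e2 : pd (fun y => 1 + ∑ j, pd u j y ^ 2) i x
      = ∑ j, 2 * (pd u j x * pd (pd u j) i x) := by
    have e3 : (fun y => 1 + ∑ j, pd u j y ^ 2)
        = (fun y => (fun _ => (1:ℝ)) y + (fun z => ∑ j, pd u j z ^ 2) y) := rfl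
    rw [e3, pd_add (differentiableAt_const 1)
      (DifferentiableAt.fun_sum fun j _ => ((diff_pd hΩ hu hx).fun_pow 2)), pd_const]
    rw [pd_sum univ (fun j y => pd u j y ^ 2) (fun j _ => (diff_pd hΩ hu hx).pow 2)]
    rw [zero_add]
    apply Finset.sum_congr rfl
    intro j _
    have e4 : (fun y => pd u j y ^ 2) = (fun y => pd u j y * pd u j y) := by
      funext y; ring
    rw [e4, pd_mul (diff_pd hΩ hu hx) (diff_pd hΩ hu hx)]
    ring
  rw [e2]
  have this1 : Real.sqrt (1 + ∑ j, pd u j x ^ 2) = Wf u x := rfl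
  rw [this1, ← Finset.mul_sum]
  rw [mul_div_mul_left _ _ (two_ne_zero)]
  rfl


theorem ginv_contract (w : Fin n → ℝ) (i : Fin n) :
    ∑ j, ginv u i j x * w j
      = w i - pd u i x * (∑ j, pd u j x * w j) / Wf u x ^ 2 := by
  unfold ginv
  rw [Finset.sum_congr rfl (fun j _ => sub_mul (if i = j then (1:ℝ) else 0)
    (pd u i x * pd u j x / Wf u x ^ 2) (w j)), Finset.sum_sub_distrib]
  congr 1
  · simp [ite_mul]
  · rw [Finset.mul_sum, Finset.sum_div]
    apply Finset.sum_congr rfl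
    intro j _
    ring

theorem cd_pd2 (hΩ : IsOpen Ω) (hu : Sm Ω u) : Sm Ω (pd (pd u j) i) :=
  cd_pd hΩ (cd_pd hΩ hu)

theorem diff_pd2 (hΩ : IsOpen Ω) (hu : Sm Ω u) (hx : x ∈ Ω) :
    DifferentiableAt ℝ (pd (pd u j) i) x :=
  diffAt hΩ (cd_pd2 hΩ hu) hx

theorem cd_Qf (hΩ : IsOpen Ω) (hu : Sm Ω u) : Sm Ω (Qf u i) :=
  ContDiffOn.sum fun j _ => (cd_pd hΩ hu).mul (cd_pd2 hΩ hu)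

theorem diff_Qf (hΩ : IsOpen Ω) (hu : Sm Ω u) (hx : x ∈ Ω) :
    DifferentiableAt ℝ (Qf u i) x :=
  diffAt hΩ (cd_Qf hΩ hu) hx

theorem pd_Qf (hΩ : IsOpen Ω) (hu : Sm Ω u) (hx : x ∈ Ω) (i k : Fin n) :
    pd (Qf u i) k x = ∑ j, (pd (pd u j) k x * pd (pd u j) i x
      + pd u j x * pd (pd (pd u j) i) k x) := by
  unfold Qf
  rw [pd_sum univ (fun j y => pd u j y * pd (pd u j) i y)
    (fun j _ => (diff_pd hΩ hu hx).mul (diff_pd2 hΩ hu hx))]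
  exact Finset.sum_congr rfl fun j _ => pd_mul (diff_pd hΩ hu hx) (diff_pd2 hΩ hu hx)

theorem Wf_eqOn (hΩ : IsOpen Ω) (hu : Sm Ω u) (i : Fin n) :
    Set.EqOn (pd (Wf u) i) (fun y => Qf u i y / Wf u y) Ω :=
  fun _ hy => pd_Wf hΩ hu hy

theorem pd_pd_Wf (hΩ : IsOpen Ω) (hu : Sm Ω u) (hx : x ∈ Ω) (i k : Fin n) :
    pd (pd (Wf u) i) k x
      = pd (Qf u i) k x / Wf u x - Qf u i x * Qf u k x / Wf u x ^ 3 := by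
  rw [pd_congr hΩ (Wf_eqOn hΩ hu i) hx]
  rw [pd_div (diff_Qf hΩ hu hx) (diffAt hΩ (cd_Wf hΩ hu) hx) (Wf_ne u)]
  rw [pd_Wf hΩ hu hx]
  have hW := Wf_ne u (x := x)
  have : (Qf u k x) = ∑ j, pd u j x * pd (pd u j) k x := rfl
  rw [← this]
  field_simp


theorem cd_Pff (hΩ : IsOpen Ω) (hu : Sm Ω u) (hf : Sm Ω f) : Sm Ω (Pff u f) :=
  ContDiffOn.sum fun j _ => (cd_pd hΩ hu).mul (cd_pd hΩ hf)

theorem diff_Pff (hΩ : IsOpen Ω) (hu : Sm Ω u) (hf : Sm Ω f) (hx : x ∈ Ω) :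
    DifferentiableAt ℝ (Pff u f) x :=
  diffAt hΩ (cd_Pff hΩ hu hf) hx

theorem pd_Pff (hΩ : IsOpen Ω) (hu : Sm Ω u) (hf : Sm Ω f) (hx : x ∈ Ω) (i : Fin n) :
    pd (Pff u f) i x = ∑ j, (pd (pd u j) i x * pd f j x
      + pd u j x * pd (pd f j) i x) := by
  unfold Pff
  rw [pd_sum univ (fun j y => pd u j y * pd f j y)
    (fun j _ => (diff_pd hΩ hu hx).mul (diff_pd hΩ hf hx))]
  exact Finset.sum_congr rfl fun j _ => pd_mul (diff_pd hΩ hu hx) (diff_pd hΩ hf hx)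

/-- contraction of `∑ᵢ uᵢ ∂ᵢ (Pff u f)`. -/
theorem sum_v_pd_Pff (hΩ : IsOpen Ω) (hu : Sm Ω u) (hf : Sm Ω f) (hx : x ∈ Ω) :
    ∑ i, pd u i x * pd (Pff u f) i x
      = ∑ j, Qf u j x * pd f j x + ∑ i, ∑ j, pd u i x * pd u j x * pd (pd f j) i x := by
  rw [Finset.sum_congr rfl (fun i (_ : i ∈ univ) => by
    rw [pd_Pff hΩ hu hf hx, Finset.mul_sum])]
  have split : ∀ i : Fin n, ∑ j, pd u i x * (pd (pd u j) i x * pd f j x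
      + pd u j x * pd (pd f j) i x)
      = (∑ j, pd u i x * pd (pd u j) i x * pd f j x)
        + ∑ j, pd u i x * pd u j x * pd (pd f j) i x := by
    intro i
    rw [← Finset.sum_add_distrib]
    exact Finset.sum_congr rfl fun j _ => by ring
  rw [Finset.sum_congr rfl (fun i _ => split i), Finset.sum_add_distrib]
  congr 1
  rw [Finset.sum_comm]
  apply Finset.sum_congr rfl
  intro j _
  rw [Qf, Finset.sum_mul]
  apply Finset.sum_congr rfl
  intro i _
  rw [pd_swap hΩ hu hx]

/-- MSE in scalar form at a point. -/
theorem mse_scalar (hΩ : IsOpen Ω) (hu : Sm Ω u)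
    (hmse : ∑ i, pd (fun y => pd u i y / Wf u y) i x = 0) (hx : x ∈ Ω) :
    (∑ i, pd (pd u i) i x) * Wf u x ^ 2 = ∑ i, pd u i x * Qf u i x := by
  have hW := Wf_ne u (x := x)
  have expand : ∀ i : Fin n, pd (fun y => pd u i y / Wf u y) i x
      = pd (pd u i) i x * (Wf u x)⁻¹ - (pd u i x * Qf u i x) * (Wf u x ^ 3)⁻¹ := by
    intro i
    rw [pd_div (diff_pd hΩ hu hx) (diffAt hΩ (cd_Wf hΩ hu) hx) hW, pd_Wf hΩ hu hx]
    have : (∑ j, pd u j x * pd (pd u j) i x) = Qf u i x := rfl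
    rw [this]
    field_simp
  rw [Finset.sum_congr rfl (fun i _ => expand i), Finset.sum_sub_distrib,
    ← Finset.sum_mul, ← Finset.sum_mul] at hmse
  have h3 : Wf u x ^ 3 ≠ 0 := pow_ne_zero 3 hW
  field_simp at hmse
  have h4 : ((∑ i, pd (pd u i) i x) * Wf u x ^ 2) * Wf u x
      = (∑ i, pd u i x * Qf u i x) * Wf u x := by linear_combination Wf u x * hmse
  exact mul_right_cancel₀ hW h4

/-- The inner function of `lapS` rewritten. -/
theorem lap_inner_eq (u f : EuclideanSpace ℝ (Fin n) → ℝ) (i : Fin n) :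
    (fun y => Wf u y * ∑ j, ginv u i j y * pd f j y)
      = fun y => Wf u y * pd f i y - pd u i y * Pff u f y / Wf u y := by
  funext y
  rw [ginv_contract]
  have hW := Wf_ne u (x := y)
  have : (∑ j, pd u j y * pd f j y) = Pff u f y := rfl
  rw [this]
  field_simp

/-- Non-divergence form of the Laplace–Beltrami operator, given the MSE. -/
theorem lapS_eq (hΩ : IsOpen Ω) (hu : Sm Ω u)
    (hmse : ∀ y ∈ Ω, ∑ i, pd (fun z => pd u i z / Wf u z) i y = 0)
    (hf : Sm Ω f) (hx : x ∈ Ω) :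
    lapS u f x = (∑ i, pd (pd f i) i x)
      - (∑ i, ∑ j, pd u i x * pd u j x * pd (pd f j) i x) / Wf u x ^ 2 := by
  have hW := Wf_ne u (x := x)
  have dW := diffAt hΩ (cd_Wf hΩ hu) hx
  have expand : ∀ i : Fin n,
      pd (fun y => Wf u y * ∑ j, ginv u i j y * pd f j y) i x
      = (Qf u i x * pd f i x) * (Wf u x)⁻¹ + pd (pd f i) i x * Wf u x
        - pd (pd u i) i x * (Pff u f x * (Wf u x)⁻¹)
        - (pd u i x * pd (Pff u f) i x) * (Wf u x)⁻¹
        + (pd u i x * Qf u i x) * (Pff u f x * (Wf u x ^ 3)⁻¹) := by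
    intro i
    rw [lap_inner_eq u f i]
    have dB : DifferentiableAt ℝ (fun y => pd u i y * Pff u f y / Wf u y) x := by
      simp only [div_eq_mul_inv]
      exact ((diff_pd hΩ hu hx).mul (diff_Pff hΩ hu hf hx)).mul (dW.inv hW)
    rw [pd_sub (dW.fun_mul (diff_pd hΩ hf hx)) dB]
    rw [pd_mul dW (diff_pd hΩ hf hx)]
    rw [pd_div ((diff_pd hΩ hu hx).fun_mul (diff_Pff hΩ hu hf hx)) dW hW]
    rw [pd_mul (diff_pd hΩ hu hx) (diff_Pff hΩ hu hf hx)]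
    rw [pd_Wf hΩ hu hx]
    have : (∑ j, pd u j x * pd (pd u j) i x) = Qf u i x := rfl
    rw [this]
    field_simp
    ring
  unfold lapS
  rw [Finset.sum_congr rfl (fun i _ => expand i)]
  rw [Finset.sum_add_distrib, Finset.sum_sub_distrib, Finset.sum_sub_distrib,
    Finset.sum_add_distrib, ← Finset.sum_mul, ← Finset.sum_mul, ← Finset.sum_mul,
    ← Finset.sum_mul, ← Finset.sum_mul]
  rw [sum_v_pd_Pff hΩ hu hf hx]
  have hm := mse_scalar hΩ hu (hmse x hx) hx
  -- abbreviations
  set W := Wf u x with hWdef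
  set S1 := ∑ i, pd (pd u i) i x
  set P1 := ∑ i, pd u i x * Qf u i x
  set QF := ∑ i, Qf u i x * pd f i x
  set E1 := ∑ i, pd (pd f i) i x
  set E2 := ∑ i, ∑ j, pd u i x * pd u j x * pd (pd f j) i x
  set S := Pff u f x
  field_simp
  linear_combination (-S) * hm

theorem diff_div' (hf : DifferentiableAt ℝ f x) (hg : DifferentiableAt ℝ g x) (h0 : g x ≠ 0) :
    DifferentiableAt ℝ (fun y => f y / g y) x := by
  simp only [div_eq_mul_inv]; exact hf.mul (hg.inv h0)

theorem pd3_outer (hΩ : IsOpen Ω) (hu : Sm Ω u) (hx : x ∈ Ω) (a b c : Fin n) :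
    pd (pd (pd u c) b) a x = pd (pd (pd u c) a) b x :=
  pd_swap hΩ (cd_pd hΩ hu) hx

theorem pd3_inner (hΩ : IsOpen Ω) (hu : Sm Ω u) (hx : x ∈ Ω) (a b c : Fin n) :
    pd (pd (pd u c) b) a x = pd (pd (pd u b) c) a x :=
  pd_congr hΩ (fun _ hy => pd_swap hΩ hu hy) hx

variable {η : EuclideanSpace ℝ (Fin n) → ℝ}

theorem pd_h (hΩ : IsOpen Ω) (hu : Sm Ω u) (hη : Sm Ω η) (hx : x ∈ Ω) (j : Fin n) :
    pd (fun y => η y * Wf u y) j x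
      = pd η j x * Wf u x + η x * (Qf u j x / Wf u x) := by
  rw [pd_mul (diffAt hΩ hη hx) (diffAt hΩ (cd_Wf hΩ hu) hx), pd_Wf hΩ hu hx]
  rfl

theorem pd_pd_h (hΩ : IsOpen Ω) (hu : Sm Ω u) (hη : Sm Ω η) (hx : x ∈ Ω) (i j : Fin n) :
    pd (pd (fun y => η y * Wf u y) j) i x
      = pd (pd η j) i x * Wf u x + pd η j x * (Qf u i x / Wf u x)
        + pd η i x * (Qf u j x / Wf u x)
        + η x * (pd (Qf u j) i x / Wf u x - Qf u j x * Qf u i x / Wf u x ^ 3) := by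
  have hW := Wf_ne u (x := x)
  have dW := diffAt hΩ (cd_Wf hΩ hu) hx
  have heq : Set.EqOn (pd (fun y => η y * Wf u y) j)
      (fun y => pd η j y * Wf u y + η y * (Qf u j y / Wf u y)) Ω :=
    fun y hy => pd_h hΩ hu hη hy j
  rw [pd_congr hΩ heq hx]
  rw [pd_add ((diff_pd hΩ hη hx).fun_mul dW)
    ((diffAt hΩ hη hx).fun_mul (diff_div' (diff_Qf hΩ hu hx) dW hW))]
  rw [pd_mul (diff_pd hΩ hη hx) dW]
  rw [pd_mul (diffAt hΩ hη hx) (diff_div' (diff_Qf hΩ hu hx) dW hW)]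
  rw [pd_div (diff_Qf hΩ hu hx) dW hW]
  rw [pd_Wf hΩ hu hx]
  have e1 : (∑ k, pd u k x * pd (pd u k) i x) = Qf u i x := rfl
  rw [e1]
  field_simp
  ring

/-- `∑ᵢ ∂ᵢ Qᵢ = S2 + B1`. -/
theorem sum_pdQ_diag (hΩ : IsOpen Ω) (hu : Sm Ω u) (hx : x ∈ Ω) :
    ∑ i, pd (Qf u i) i x
      = (∑ i, ∑ j, pd (pd u j) i x * pd (pd u j) i x)
        + ∑ i, ∑ j, pd u j x * pd (pd (pd u j) i) i x := by
  rw [Finset.sum_congr rfl (fun i (_ : i ∈ univ) => pd_Qf hΩ hu hx i i)]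
  rw [← Finset.sum_add_distrib]
  exact Finset.sum_congr rfl fun i _ => Finset.sum_add_distrib

/-- `∑ᵢⱼ uᵢ uⱼ ∂ᵢ Qⱼ = P2 + B2`. -/
theorem sum_vv_pdQ (hΩ : IsOpen Ω) (hu : Sm Ω u) (hx : x ∈ Ω) :
    ∑ i, ∑ j, pd u i x * pd u j x * pd (Qf u j) i x
      = (∑ i, Qf u i x * Qf u i x)
        + ∑ i, ∑ j, ∑ k, pd u i x * pd u j x * pd u k x * pd (pd (pd u k) j) i x := by
  have per : ∀ i j : Fin n, pd u i x * pd u j x * pd (Qf u j) i x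
      = (∑ k, (pd u i x * pd (pd u k) i x) * (pd u j x * pd (pd u k) j x))
        + ∑ k, pd u i x * pd u j x * pd u k x * pd (pd (pd u k) j) i x := by
    intro i j
    rw [pd_Qf hΩ hu hx j i, Finset.mul_sum, ← Finset.sum_add_distrib]
    exact Finset.sum_congr rfl fun k _ => by ring
  rw [Finset.sum_congr rfl (fun i (_ : i ∈ univ) =>
    Finset.sum_congr rfl (fun j (_ : j ∈ univ) => per i j))]
  rw [Finset.sum_congr rfl (fun i (_ : i ∈ univ) => Finset.sum_add_distrib),
    Finset.sum_add_distrib]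
  congr 1
  rw [Finset.sum_congr rfl (fun i (_ : i ∈ univ) => Finset.sum_comm), Finset.sum_comm]
  apply Finset.sum_congr rfl
  intro k _
  rw [← Finset.sum_mul_sum]
  have eQ : ∀ m : Fin n, (∑ i, pd u i x * pd (pd u m) i x) = Qf u m x := by
    intro m
    rw [Qf]
    exact Finset.sum_congr rfl fun i _ => by rw [pd_swap hΩ hu hx]
  rw [eQ k]

/-- scalar form of `normA2`'s sum. -/
theorem normA2_scalar (hΩ : IsOpen Ω) (hu : Sm Ω u) (hx : x ∈ Ω) :
    ∑ i, ∑ j, ∑ k, ∑ l, ginv u i k x * ginv u j l x * pd (pd u j) i x * pd (pd u l) k x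
      = (∑ i, ∑ j, pd (pd u j) i x * pd (pd u j) i x)
        - 2 * (∑ i, Qf u i x * Qf u i x) / Wf u x ^ 2
        + (∑ i, pd u i x * Qf u i x) * (∑ i, pd u i x * Qf u i x) / Wf u x ^ 4 := by
  have hW := Wf_ne u (x := x)
  have step_l : ∀ i j k : Fin n,
      ∑ l, ginv u i k x * ginv u j l x * pd (pd u j) i x * pd (pd u l) k x
      = ginv u i k x * pd (pd u j) i x
          * (pd (pd u j) k x - pd u j x * Qf u k x / Wf u x ^ 2) := by
    intro i j k
    have e : ∑ l, ginv u i k x * ginv u j l x * pd (pd u j) i x * pd (pd u l) k x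
        = ginv u i k x * pd (pd u j) i x * ∑ l, ginv u j l x * pd (pd u l) k x := by
      rw [Finset.mul_sum]
      exact Finset.sum_congr rfl fun l _ => by ring
    rw [e, ginv_contract (w := fun l => pd (pd u l) k x) j]
    rfl
  have step_k : ∀ i j : Fin n,
      ∑ k, ginv u i k x * pd (pd u j) i x
          * (pd (pd u j) k x - pd u j x * Qf u k x / Wf u x ^ 2)
      = pd (pd u j) i x * (pd (pd u j) i x - pd u j x * Qf u i x / Wf u x ^ 2
          - pd u i x * (Qf u j x - pd u j x * (∑ m, pd u m x * Qf u m x) / Wf u x ^ 2)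
            / Wf u x ^ 2) := by
    intro i j
    have e : ∑ k, ginv u i k x * pd (pd u j) i x
          * (pd (pd u j) k x - pd u j x * Qf u k x / Wf u x ^ 2)
        = pd (pd u j) i x * ∑ k, ginv u i k x
            * (pd (pd u j) k x - pd u j x * Qf u k x / Wf u x ^ 2) := by
      rw [Finset.mul_sum]
      exact Finset.sum_congr rfl fun k _ => by ring
    rw [e, ginv_contract (w := fun k => pd (pd u j) k x - pd u j x * Qf u k x / Wf u x ^ 2) i]
    have e2 : ∑ k, pd u k x * (pd (pd u j) k x - pd u j x * Qf u k x / Wf u x ^ 2)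
        = Qf u j x - pd u j x * (∑ m, pd u m x * Qf u m x) / Wf u x ^ 2 := by
      rw [Finset.sum_congr rfl (fun k (_ : k ∈ univ) =>
        mul_sub (pd u k x) (pd (pd u j) k x) (pd u j x * Qf u k x / Wf u x ^ 2)),
        Finset.sum_sub_distrib]
      congr 1
      · rw [Qf]
        exact Finset.sum_congr rfl fun k _ => by rw [pd_swap hΩ hu hx]
      · rw [Finset.mul_sum, Finset.sum_div]
        exact Finset.sum_congr rfl fun k _ => by ring
    rw [e2]
  rw [Finset.sum_congr rfl (fun i (_ : i ∈ univ) => Finset.sum_congr rfl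
    (fun j (_ : j ∈ univ) => by
      rw [Finset.sum_congr rfl (fun k (_ : k ∈ univ) => step_l i j k), step_k i j]))]
  have per : ∀ i j : Fin n, pd (pd u j) i x * (pd (pd u j) i x
        - pd u j x * Qf u i x / Wf u x ^ 2
        - pd u i x * (Qf u j x - pd u j x * (∑ m, pd u m x * Qf u m x) / Wf u x ^ 2)
          / Wf u x ^ 2)
      = pd (pd u j) i x * pd (pd u j) i x
        - (pd u j x * pd (pd u j) i x) * Qf u i x / Wf u x ^ 2
        - (pd u i x * pd (pd u j) i x) * Qf u j x / Wf u x ^ 2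
        + (pd u i x * (pd u j x * pd (pd u j) i x)) * (∑ m, pd u m x * Qf u m x) / Wf u x ^ 4 := by
    intro i j
    field_simp
    ring
  rw [Finset.sum_congr rfl (fun i (_ : i ∈ univ) => Finset.sum_congr rfl
    (fun j (_ : j ∈ univ) => per i j))]
  have split : ∀ i : Fin n, ∑ j, (pd (pd u j) i x * pd (pd u j) i x
        - (pd u j x * pd (pd u j) i x) * Qf u i x / Wf u x ^ 2
        - (pd u i x * pd (pd u j) i x) * Qf u j x / Wf u x ^ 2
        + (pd u i x * (pd u j x * pd (pd u j) i x)) * (∑ m, pd u m x * Qf u m x) / Wf u x ^ 4)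
      = (∑ j, pd (pd u j) i x * pd (pd u j) i x)
        - (Qf u i x * Qf u i x) / Wf u x ^ 2
        - (∑ j, (pd u i x * pd (pd u j) i x) * Qf u j x) / Wf u x ^ 2
        + (pd u i x * Qf u i x) * (∑ m, pd u m x * Qf u m x) / Wf u x ^ 4 := by
    intro i
    have hB : ∑ j, (pd u j x * pd (pd u j) i x) * Qf u i x / Wf u x ^ 2
        = Qf u i x * Qf u i x / Wf u x ^ 2 := by
      rw [← Finset.sum_div, ← Finset.sum_mul]
      have e : (∑ j, pd u j x * pd (pd u j) i x) = Qf u i x := rfl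
      rw [e]
    have hC : ∑ j, (pd u i x * pd (pd u j) i x) * Qf u j x / Wf u x ^ 2
        = (∑ j, (pd u i x * pd (pd u j) i x) * Qf u j x) / Wf u x ^ 2 :=
      (Finset.sum_div _ _ _).symm
    have hD : ∑ j, (pd u i x * (pd u j x * pd (pd u j) i x))
          * (∑ m, pd u m x * Qf u m x) / Wf u x ^ 4
        = (pd u i x * Qf u i x) * (∑ m, pd u m x * Qf u m x) / Wf u x ^ 4 := by
      rw [← Finset.sum_div, ← Finset.sum_mul]
      congr 2
      rw [← Finset.mul_sum]
      have e : (∑ j, pd u j x * pd (pd u j) i x) = Qf u i x := rfl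
      rw [e]
    rw [Finset.sum_add_distrib, Finset.sum_sub_distrib, Finset.sum_sub_distrib, hB, hC, hD]
  rw [Finset.sum_congr rfl (fun i (_ : i ∈ univ) => split i)]
  rw [Finset.sum_add_distrib, Finset.sum_sub_distrib, Finset.sum_sub_distrib]
  have eTb : ∑ i, (∑ j, (pd u i x * pd (pd u j) i x) * Qf u j x) / Wf u x ^ 2
      = (∑ i, Qf u i x * Qf u i x) / Wf u x ^ 2 := by
    rw [← Finset.sum_div]
    congr 1
    rw [Finset.sum_comm]
    apply Finset.sum_congr rfl
    intro j _
    rw [← Finset.sum_mul]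
    congr 1
    rw [Qf]
    exact Finset.sum_congr rfl fun i _ => by rw [pd_swap hΩ hu hx]
  rw [eTb]
  rw [← Finset.sum_div, ← Finset.sum_div, ← Finset.sum_mul]
  field_simp
  ring

/-- derivative of the MSE in direction `k`, polynomial form. -/
theorem mse_deriv (hΩ : IsOpen Ω) (hu : Sm Ω u)
    (hmse : ∀ y ∈ Ω, ∑ i, pd (fun z => pd u i z / Wf u z) i y = 0)
    (hx : x ∈ Ω) (k : Fin n) :
    ∑ i, (pd (pd (pd u i) i) k x * Wf u x ^ 4
      - pd (pd u i) i x * Qf u k x * Wf u x ^ 2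
      - pd (pd u i) k x * Qf u i x * Wf u x ^ 2
      - pd u i x * pd (Qf u i) k x * Wf u x ^ 2
      + 3 * pd u i x * Qf u i x * Qf u k x) = 0 := by
  have hW := Wf_ne u (x := x)
  have dW := diffAt hΩ (cd_Wf hΩ hu) hx
  set G2 : EuclideanSpace ℝ (Fin n) → ℝ := fun y =>
    ∑ i, (pd (pd u i) i y * (Wf u y)⁻¹ - pd u i y * Qf u i y * (Wf u y ^ 3)⁻¹) with hG2
  have hG2eq : ∀ y ∈ Ω, G2 y = 0 := by
    intro y hy
    have expand : ∀ i : Fin n, pd (fun z => pd u i z / Wf u z) i y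
        = pd (pd u i) i y * (Wf u y)⁻¹ - pd u i y * Qf u i y * (Wf u y ^ 3)⁻¹ := by
      intro i
      rw [pd_div (diff_pd hΩ hu hy) (diffAt hΩ (cd_Wf hΩ hu) hy) (Wf_ne u), pd_Wf hΩ hu hy]
      have : (∑ j, pd u j y * pd (pd u j) i y) = Qf u i y := rfl
      rw [this]
      have hWy := Wf_ne u (x := y)
      field_simp
    show (∑ i, (pd (pd u i) i y * (Wf u y)⁻¹ - pd u i y * Qf u i y * (Wf u y ^ 3)⁻¹)) = 0
    rw [← Finset.sum_congr rfl (fun i (_ : i ∈ univ) => expand i)]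
    exact hmse y hy
  have h0 : pd G2 k x = 0 := by
    rw [pd_congr hΩ (fun y hy => hG2eq y hy) hx, pd_const]
  have dinvW : DifferentiableAt ℝ (fun y => (Wf u y)⁻¹) x := dW.inv hW
  have hW3ne : Wf u x ^ 3 ≠ 0 := pow_ne_zero 3 hW
  have eW3 : (fun y => Wf u y ^ 3) = fun y => Wf u y * (Wf u y * Wf u y) := by
    funext y; ring
  have dW3 : DifferentiableAt ℝ (fun y => Wf u y ^ 3) x := by
    rw [eW3]; exact dW.mul (dW.mul dW)
  have dinvW3 : DifferentiableAt ℝ (fun y => (Wf u y ^ 3)⁻¹) x := dW3.inv hW3ne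
  have pdW3 : pd (fun y => Wf u y ^ 3) k x = 3 * Wf u x * Qf u k x := by
    rw [eW3, pd_mul dW (dW.fun_mul dW), pd_mul dW dW, pd_Wf hΩ hu hx]
    have : (∑ j, pd u j x * pd (pd u j) k x) = Qf u k x := rfl
    rw [this]
    field_simp
    ring
  have pdinvW : pd (fun y => (Wf u y)⁻¹) k x = -(Qf u k x) / Wf u x ^ 3 := by
    rw [pd_inv dW hW, pd_Wf hΩ hu hx]
    have : (∑ j, pd u j x * pd (pd u j) k x) = Qf u k x := rfl
    rw [this]
    field_simp
  have pdinvW3 : pd (fun y => (Wf u y ^ 3)⁻¹) k x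
      = -(3 * Wf u x * Qf u k x) / Wf u x ^ 6 := by
    rw [pd_inv dW3 hW3ne, pdW3]
    congr 1
    ring
  have expand2 : ∀ i : Fin n,
      pd (fun y => pd (pd u i) i y * (Wf u y)⁻¹
        - pd u i y * Qf u i y * (Wf u y ^ 3)⁻¹) k x
      = (pd (pd (pd u i) i) k x * (Wf u x)⁻¹
          + pd (pd u i) i x * (-(Qf u k x) / Wf u x ^ 3))
        - ((pd (pd u i) k x * Qf u i x + pd u i x * pd (Qf u i) k x) * (Wf u x ^ 3)⁻¹
          + pd u i x * Qf u i x * (-(3 * Wf u x * Qf u k x) / Wf u x ^ 6)) := by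
    intro i
    rw [pd_sub ((diff_pd2 hΩ hu hx).fun_mul dinvW)
      (((diff_pd hΩ hu hx).fun_mul (diff_Qf hΩ hu hx)).fun_mul dinvW3)]
    rw [pd_mul (diff_pd2 hΩ hu hx) dinvW]
    rw [pd_mul ((diff_pd hΩ hu hx).fun_mul (diff_Qf hΩ hu hx)) dinvW3]
    rw [pd_mul (diff_pd hΩ hu hx) (diff_Qf hΩ hu hx)]
    rw [pdinvW, pdinvW3]
  have hsum : pd G2 k x = ∑ i, ((pd (pd (pd u i) i) k x * (Wf u x)⁻¹
          + pd (pd u i) i x * (-(Qf u k x) / Wf u x ^ 3))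
        - ((pd (pd u i) k x * Qf u i x + pd u i x * pd (Qf u i) k x) * (Wf u x ^ 3)⁻¹
          + pd u i x * Qf u i x * (-(3 * Wf u x * Qf u k x) / Wf u x ^ 6))) := by
    rw [hG2]
    rw [pd_sum univ _ (fun i _ => ((diff_pd2 hΩ hu hx).fun_mul dinvW).fun_sub
      (((diff_pd hΩ hu hx).fun_mul (diff_Qf hΩ hu hx)).fun_mul dinvW3))]
    exact Finset.sum_congr rfl fun i _ => expand2 i
  have key : ∑ i, (pd (pd (pd u i) i) k x * Wf u x ^ 4
      - pd (pd u i) i x * Qf u k x * Wf u x ^ 2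
      - pd (pd u i) k x * Qf u i x * Wf u x ^ 2
      - pd u i x * pd (Qf u i) k x * Wf u x ^ 2
      + 3 * pd u i x * Qf u i x * Qf u k x)
      = Wf u x ^ 5 * pd G2 k x := by
    rw [hsum, Finset.mul_sum]
    apply Finset.sum_congr rfl
    intro i _
    field_simp
    ring
  rw [key, h0, mul_zero]

/-- contracted differentiated MSE, in canonical sums. -/
theorem mse_rel (hΩ : IsOpen Ω) (hu : Sm Ω u)
    (hmse : ∀ y ∈ Ω, ∑ i, pd (fun z => pd u i z / Wf u z) i y = 0)
    (hx : x ∈ Ω) :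
    (∑ i, ∑ j, pd u j x * pd (pd (pd u j) i) i x) * Wf u x ^ 4
      = (∑ i, pd (pd u i) i x) * (∑ i, pd u i x * Qf u i x) * Wf u x ^ 2
        + (∑ i, Qf u i x * Qf u i x) * Wf u x ^ 2
        + ((∑ i, Qf u i x * Qf u i x)
          + ∑ i, ∑ j, ∑ k, pd u i x * pd u j x * pd u k x * pd (pd (pd u k) j) i x)
          * Wf u x ^ 2
        - 3 * (∑ i, pd u i x * Qf u i x) * (∑ i, pd u i x * Qf u i x) := by
  have hd := mse_deriv hΩ hu hmse hx
  have hc : ∑ k, pd u k x * (∑ i, (pd (pd (pd u i) i) k x * Wf u x ^ 4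
      - pd (pd u i) i x * Qf u k x * Wf u x ^ 2
      - pd (pd u i) k x * Qf u i x * Wf u x ^ 2
      - pd u i x * pd (Qf u i) k x * Wf u x ^ 2
      + 3 * pd u i x * Qf u i x * Qf u k x)) = 0 := by
    rw [Finset.sum_congr rfl (fun k (_ : k ∈ univ) => by rw [hd k, mul_zero])]
    exact Finset.sum_const_zero
  have per : ∀ k : Fin n, pd u k x * (∑ i, (pd (pd (pd u i) i) k x * Wf u x ^ 4
      - pd (pd u i) i x * Qf u k x * Wf u x ^ 2
      - pd (pd u i) k x * Qf u i x * Wf u x ^ 2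
      - pd u i x * pd (Qf u i) k x * Wf u x ^ 2
      + 3 * pd u i x * Qf u i x * Qf u k x))
      = (∑ i, pd u k x * pd (pd (pd u i) i) k x) * Wf u x ^ 4
        - (∑ i, pd u k x * (pd (pd u i) i x * Qf u k x)) * Wf u x ^ 2
        - (∑ i, pd u k x * (pd (pd u i) k x * Qf u i x)) * Wf u x ^ 2
        - (∑ i, pd u k x * (pd u i x * pd (Qf u i) k x)) * Wf u x ^ 2
        + 3 * ∑ i, pd u k x * (pd u i x * Qf u i x * Qf u k x) := by
    intro k
    rw [Finset.mul_sum, Finset.sum_mul, Finset.sum_mul, Finset.sum_mul, Finset.sum_mul,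
      Finset.mul_sum, ← Finset.sum_sub_distrib, ← Finset.sum_sub_distrib,
      ← Finset.sum_sub_distrib, ← Finset.sum_add_distrib]
    exact Finset.sum_congr rfl fun i _ => by ring
  rw [Finset.sum_congr rfl (fun k (_ : k ∈ univ) => per k)] at hc
  rw [Finset.sum_add_distrib, Finset.sum_sub_distrib, Finset.sum_sub_distrib,
    Finset.sum_sub_distrib, ← Finset.sum_mul, ← Finset.sum_mul, ← Finset.sum_mul,
    ← Finset.sum_mul, ← Finset.mul_sum] at hc
  have hX1 : ∑ k, ∑ i, pd u k x * pd (pd (pd u i) i) k x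
      = ∑ i, ∑ j, pd u j x * pd (pd (pd u j) i) i x := by
    rw [Finset.sum_comm]
    apply Finset.sum_congr rfl; intro i _
    apply Finset.sum_congr rfl; intro k _
    rw [pd3_outer hΩ hu hx, pd3_inner hΩ hu hx]
  have hX2 : ∑ k, ∑ i, pd u k x * (pd (pd u i) i x * Qf u k x)
      = (∑ i, pd (pd u i) i x) * ∑ i, pd u i x * Qf u i x := by
    rw [Finset.sum_comm]
    rw [Finset.sum_mul]
    apply Finset.sum_congr rfl; intro i _
    rw [Finset.mul_sum]
    apply Finset.sum_congr rfl; intro k _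
    ring
  have hX3 : ∑ k, ∑ i, pd u k x * (pd (pd u i) k x * Qf u i x)
      = ∑ i, Qf u i x * Qf u i x := by
    rw [Finset.sum_comm]
    apply Finset.sum_congr rfl; intro i _
    have e : ∀ k : Fin n, pd u k x * (pd (pd u i) k x * Qf u i x)
        = (pd u k x * pd (pd u k) i x) * Qf u i x := by
      intro k
      rw [pd_swap hΩ hu hx]
      ring
    rw [Finset.sum_congr rfl (fun k _ => e k), ← Finset.sum_mul]
    have : (∑ k, pd u k x * pd (pd u k) i x) = Qf u i x := rfl
    rw [this]
  have hX4 : ∑ k, ∑ i, pd u k x * (pd u i x * pd (Qf u i) k x)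
      = (∑ i, Qf u i x * Qf u i x)
        + ∑ i, ∑ j, ∑ k, pd u i x * pd u j x * pd u k x * pd (pd (pd u k) j) i x := by
    rw [← sum_vv_pdQ hΩ hu hx]
    apply Finset.sum_congr rfl; intro k _
    apply Finset.sum_congr rfl; intro i _
    ring
  have hX5 : ∑ k, ∑ i, pd u k x * (pd u i x * Qf u i x * Qf u k x)
      = (∑ i, pd u i x * Qf u i x) * (∑ i, pd u i x * Qf u i x) := by
    rw [Finset.sum_mul]
    apply Finset.sum_congr rfl; intro k _
    rw [Finset.mul_sum]
    apply Finset.sum_congr rfl; intro i _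
    ring
  rw [hX1, hX2, hX3, hX4, hX5] at hc
  linarith [hc]

/-- diagonal second derivatives of `h = ηW`. -/
theorem sum_hdiag (hΩ : IsOpen Ω) (hu : Sm Ω u) (hη : Sm Ω η) (hx : x ∈ Ω) :
    ∑ i, pd (pd (fun y => η y * Wf u y) i) i x
      = (∑ i, pd (pd η i) i x) * Wf u x
        + (∑ i, Qf u i x * pd η i x) * (Wf u x)⁻¹
        + (∑ i, Qf u i x * pd η i x) * (Wf u x)⁻¹
        + η x * (Wf u x)⁻¹ * ((∑ i, ∑ j, pd (pd u j) i x * pd (pd u j) i x)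
            + ∑ i, ∑ j, pd u j x * pd (pd (pd u j) i) i x)
        - η x * (Wf u x ^ 3)⁻¹ * (∑ i, Qf u i x * Qf u i x) := by
  have hW := Wf_ne u (x := x)
  rw [Finset.sum_congr rfl (fun i (_ : i ∈ univ) => pd_pd_h hΩ hu hη hx i i)]
  have per : ∀ i : Fin n,
      pd (pd η i) i x * Wf u x + pd η i x * (Qf u i x / Wf u x)
        + pd η i x * (Qf u i x / Wf u x)
        + η x * (pd (Qf u i) i x / Wf u x - Qf u i x * Qf u i x / Wf u x ^ 3)
      = pd (pd η i) i x * Wf u x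
        + (Qf u i x * pd η i x) * (Wf u x)⁻¹
        + (Qf u i x * pd η i x) * (Wf u x)⁻¹
        + (η x * (Wf u x)⁻¹) * pd (Qf u i) i x
        - (η x * (Wf u x ^ 3)⁻¹) * (Qf u i x * Qf u i x) := by
    intro i
    field_simp
    ring
  rw [Finset.sum_congr rfl (fun i _ => per i)]
  rw [Finset.sum_sub_distrib, Finset.sum_add_distrib, Finset.sum_add_distrib,
    Finset.sum_add_distrib, ← Finset.sum_mul, ← Finset.sum_mul,
    ← Finset.mul_sum, ← Finset.mul_sum]
  rw [sum_pdQ_diag hΩ hu hx]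

/-- `uᵢuⱼ`-contracted second derivatives of `h = ηW`. -/
theorem sum_hvv (hΩ : IsOpen Ω) (hu : Sm Ω u) (hη : Sm Ω η) (hx : x ∈ Ω) :
    ∑ i, ∑ j, pd u i x * pd u j x * pd (pd (fun y => η y * Wf u y) j) i x
      = (∑ i, ∑ j, pd u i x * pd u j x * pd (pd η j) i x) * Wf u x
        + ((∑ i, pd u i x * Qf u i x) * (∑ i, pd u i x * pd η i x)) * (Wf u x)⁻¹
        + ((∑ i, pd u i x * pd η i x) * (∑ i, pd u i x * Qf u i x)) * (Wf u x)⁻¹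
        + η x * (Wf u x)⁻¹ * ((∑ i, Qf u i x * Qf u i x)
            + ∑ i, ∑ j, ∑ k, pd u i x * pd u j x * pd u k x * pd (pd (pd u k) j) i x)
        - η x * (Wf u x ^ 3)⁻¹
            * ((∑ i, pd u i x * Qf u i x) * (∑ i, pd u i x * Qf u i x)) := by
  have hW := Wf_ne u (x := x)
  rw [Finset.sum_congr rfl (fun i (_ : i ∈ univ) => Finset.sum_congr rfl
    (fun j (_ : j ∈ univ) => by rw [pd_pd_h hΩ hu hη hx i j]))]
  have per : ∀ i j : Fin n,
      pd u i x * pd u j x * (pd (pd η j) i x * Wf u x + pd η j x * (Qf u i x / Wf u x)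
        + pd η i x * (Qf u j x / Wf u x)
        + η x * (pd (Qf u j) i x / Wf u x - Qf u j x * Qf u i x / Wf u x ^ 3))
      = (pd u i x * pd u j x * pd (pd η j) i x) * Wf u x
        + ((pd u i x * Qf u i x) * (pd u j x * pd η j x)) * (Wf u x)⁻¹
        + ((pd u i x * pd η i x) * (pd u j x * Qf u j x)) * (Wf u x)⁻¹
        + (η x * (Wf u x)⁻¹) * (pd u i x * pd u j x * pd (Qf u j) i x)
        - (η x * (Wf u x ^ 3)⁻¹) * ((pd u i x * Qf u i x) * (pd u j x * Qf u j x)) := by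
    intro i j
    field_simp
    ring
  rw [Finset.sum_congr rfl (fun i (_ : i ∈ univ) => Finset.sum_congr rfl
    (fun j (_ : j ∈ univ) => per i j))]
  have inner : ∀ i : Fin n, ∑ j, ((pd u i x * pd u j x * pd (pd η j) i x) * Wf u x
        + ((pd u i x * Qf u i x) * (pd u j x * pd η j x)) * (Wf u x)⁻¹
        + ((pd u i x * pd η i x) * (pd u j x * Qf u j x)) * (Wf u x)⁻¹
        + (η x * (Wf u x)⁻¹) * (pd u i x * pd u j x * pd (Qf u j) i x)
        - (η x * (Wf u x ^ 3)⁻¹) * ((pd u i x * Qf u i x) * (pd u j x * Qf u j x)))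
      = (∑ j, pd u i x * pd u j x * pd (pd η j) i x) * Wf u x
        + ((pd u i x * Qf u i x) * (∑ j, pd u j x * pd η j x)) * (Wf u x)⁻¹
        + ((pd u i x * pd η i x) * (∑ j, pd u j x * Qf u j x)) * (Wf u x)⁻¹
        + (η x * (Wf u x)⁻¹) * (∑ j, pd u i x * pd u j x * pd (Qf u j) i x)
        - (η x * (Wf u x ^ 3)⁻¹) * ((pd u i x * Qf u i x) * (∑ j, pd u j x * Qf u j x)) := by
    intro i
    rw [Finset.sum_sub_distrib, Finset.sum_add_distrib, Finset.sum_add_distrib,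
      Finset.sum_add_distrib]
    congr 1
    · congr 1
      · congr 1
        · congr 1
          · rw [← Finset.sum_mul]
          · rw [← Finset.sum_mul, ← Finset.mul_sum]
        · rw [← Finset.sum_mul, ← Finset.mul_sum]
      · rw [← Finset.mul_sum]
    · rw [← Finset.mul_sum, ← Finset.mul_sum]
  rw [Finset.sum_congr rfl (fun i _ => inner i)]
  rw [Finset.sum_sub_distrib, Finset.sum_add_distrib, Finset.sum_add_distrib,
    Finset.sum_add_distrib]
  congr 1
  · congr 1
    · congr 1
      · congr 1
        · rw [← Finset.sum_mul]
        · rw [← Finset.sum_mul, ← Finset.sum_mul]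
      · rw [← Finset.sum_mul, ← Finset.sum_mul]
    · rw [← Finset.mul_sum, sum_vv_pdQ hΩ hu hx]
  · rw [← Finset.mul_sum, ← Finset.sum_mul]

/-- sum `∑ⱼ uⱼ ∂ⱼ(ηW)`. -/
theorem sum_v_pdh (hΩ : IsOpen Ω) (hu : Sm Ω u) (hη : Sm Ω η) (hx : x ∈ Ω) :
    ∑ j, pd u j x * pd (fun y => η y * Wf u y) j x
      = (∑ j, pd u j x * pd η j x) * Wf u x
        + (η x * (Wf u x)⁻¹) * ∑ j, pd u j x * Qf u j x := by
  have hW := Wf_ne u (x := x)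
  rw [Finset.sum_congr rfl (fun j (_ : j ∈ univ) => by rw [pd_h hΩ hu hη hx j])]
  have per : ∀ j : Fin n, pd u j x * (pd η j x * Wf u x + η x * (Qf u j x / Wf u x))
      = (pd u j x * pd η j x) * Wf u x + (η x * (Wf u x)⁻¹) * (pd u j x * Qf u j x) := by
    intro j
    field_simp
  rw [Finset.sum_congr rfl (fun j _ => per j), Finset.sum_add_distrib,
    ← Finset.sum_mul, ← Finset.mul_sum]

/-- the cross term of `Lop` for `h = ηW`. -/
theorem cross_term (hΩ : IsOpen Ω) (hu : Sm Ω u) (hη : Sm Ω η) (hx : x ∈ Ω) :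
    ∑ i, ∑ j, ginv u i j x * (pd (Wf u) i x / Wf u x) * pd (fun y => η y * Wf u y) j x
      = (∑ i, Qf u i x * pd η i x) * (Wf u x)⁻¹
        + η x * (∑ i, Qf u i x * Qf u i x) * (Wf u x ^ 3)⁻¹
        - (∑ i, pd u i x * Qf u i x) * (∑ i, pd u i x * pd η i x) * (Wf u x ^ 3)⁻¹
        - η x * ((∑ i, pd u i x * Qf u i x) * (∑ i, pd u i x * Qf u i x))
            * (Wf u x ^ 5)⁻¹ := by
  have hW := Wf_ne u (x := x)
  have inner : ∀ i : Fin n,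
      ∑ j, ginv u i j x * (pd (Wf u) i x / Wf u x) * pd (fun y => η y * Wf u y) j x
      = (pd (Wf u) i x / Wf u x)
          * (pd (fun y => η y * Wf u y) i x
            - pd u i x * (∑ j, pd u j x * pd (fun y => η y * Wf u y) j x) / Wf u x ^ 2) := by
    intro i
    have e : ∑ j, ginv u i j x * (pd (Wf u) i x / Wf u x) * pd (fun y => η y * Wf u y) j x
        = (pd (Wf u) i x / Wf u x)
          * ∑ j, ginv u i j x * pd (fun y => η y * Wf u y) j x := by
      rw [Finset.mul_sum]
      exact Finset.sum_congr rfl fun j _ => by ring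
    rw [e, ginv_contract (w := fun j => pd (fun y => η y * Wf u y) j x) i]
  rw [Finset.sum_congr rfl (fun i (_ : i ∈ univ) => inner i)]
  rw [Finset.sum_congr rfl (fun i (_ : i ∈ univ) => by
    rw [sum_v_pdh hΩ hu hη hx, pd_h hΩ hu hη hx i, pd_Wf hΩ hu hx])]
  have eQ : ∀ i : Fin n, (∑ j, pd u j x * pd (pd u j) i x) = Qf u i x := fun i => rfl
  rw [Finset.sum_congr rfl (fun i (_ : i ∈ univ) => by rw [eQ i])]
  have per : ∀ i : Fin n,
      Qf u i x / Wf u x / Wf u x * (pd η i x * Wf u x + η x * (Qf u i x / Wf u x)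
        - pd u i x * ((∑ j, pd u j x * pd η j x) * Wf u x
            + (η x * (Wf u x)⁻¹) * ∑ j, pd u j x * Qf u j x) / Wf u x ^ 2)
      = (Qf u i x * pd η i x) * (Wf u x)⁻¹
        + (η x * (Wf u x ^ 3)⁻¹) * (Qf u i x * Qf u i x)
        - ((∑ j, pd u j x * pd η j x) * (Wf u x ^ 3)⁻¹) * (pd u i x * Qf u i x)
        - (η x * (∑ j, pd u j x * Qf u j x) * (Wf u x ^ 5)⁻¹) * (pd u i x * Qf u i x) := by
    intro i
    field_simp
    ring
  rw [Finset.sum_congr rfl (fun i _ => per i)]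
  rw [Finset.sum_sub_distrib, Finset.sum_sub_distrib, Finset.sum_add_distrib,
    ← Finset.sum_mul, ← Finset.mul_sum, ← Finset.mul_sum, ← Finset.mul_sum]
  ring
end MSE

/-- For a smooth solution `u` of the minimal surface equation and smooth `η`,
with `h = η W`, one has `L h = W (Δˢη + η |A|²)`. -/
theorem L_of_eta_W (n : ℕ)
    (Ω : Set (EuclideanSpace ℝ (Fin n))) (hΩ : IsOpen Ω)
    (u : EuclideanSpace ℝ (Fin n) → ℝ) (hu : ContDiffOn ℝ (⊤ : ℕ∞) u Ω)
    (hmse : ∀ x ∈ Ω, ∑ i, pd (fun y => pd u i y / Wf u y) i x = 0)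
    (η : EuclideanSpace ℝ (Fin n) → ℝ) (hη : ContDiffOn ℝ (⊤ : ℕ∞) η Ω) :
    ∀ x ∈ Ω, Lop u (fun y => η y * Wf u y) x
      = Wf u x * (lapS u η x + η x * normA2 u x) := by
  intro x hx
  have hW := MSE.Wf_ne u (x := x)
  have hh : MSE.Sm Ω (fun y => η y * Wf u y) := hη.mul (MSE.cd_Wf hΩ hu)
  have hm := MSE.mse_scalar hΩ hu (hmse x hx) hx
  have hrel := MSE.mse_rel hΩ hu hmse hx
  unfold Lop normA2
  rw [MSE.lapS_eq hΩ hu hmse hh hx, MSE.lapS_eq hΩ hu hmse hη hx,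
      MSE.sum_hdiag hΩ hu hη hx, MSE.sum_hvv hΩ hu hη hx,
      MSE.cross_term hΩ hu hη hx, MSE.normA2_scalar hΩ hu hx]
  field_simp
  linear_combination (η x) * hrel
    + (η x * (∑ i, pd u i x * Qf u i x)) * hm
    - (2 * Wf u x ^ 2 * η x) * (Finset.sum_congr rfl fun i _ => sq (Qf u i x) :
      ∑ i, Qf u i x ^ 2 = ∑ i, Qf u i x * Qf u i x)
end

section
/- Fix an integer n ≥ 2 and r₀ > 0, and let φ(r) = ∫_{r₀}^{r} dt / √((t/r₀)^{2n} − 1). Define w(x) = φ(|x|) − φ(2r₀) on the annulus A = {x ∈ ℝⁿ : 2r₀ < |x| < 4r₀}. Then w is a strict supersolution of the minimal surface equation on A: Σᵢ ∂ᵢ(∂ᵢw / √(1+|∇w|²)) < 0 on A; moreover w = 0 on {|x| = 2r₀}, w = φ(4r₀) − φ(2r₀) > 0 on {|x| = 4r₀}, and 0 < w < φ(4r₀) − φ(2r₀) in A. -/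
open Real MeasureTheory intervalIntegral

/-- The catenoid height function `φ(r) = ∫_{r₀}^{r} dt / √((t/r₀)^{2n} − 1)`. -/
noncomputable def phi (n : ℕ) (r₀ r : ℝ) : ℝ :=
  ∫ t in r₀..r, 1 / Real.sqrt ((t / r₀) ^ (2 * n) - 1)

section Helpers

noncomputable def F (n : ℕ) (r₀ t : ℝ) : ℝ := 1 / Real.sqrt ((t / r₀) ^ (2 * n) - 1)

lemma F_pos {n : ℕ} (hn : 1 ≤ n) {r₀ t : ℝ} (hr₀ : 0 < r₀) (ht : r₀ < t) :
    0 < F n r₀ t := by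
  have h1 : (1:ℝ) < t / r₀ := (one_lt_div hr₀).2 ht
  have : (1:ℝ) < (t / r₀) ^ (2 * n) := one_lt_pow₀ h1 (by omega)
  exact div_pos one_pos (Real.sqrt_pos.2 (by linarith))

lemma F_cont {n : ℕ} (hn : 1 ≤ n) {r₀ : ℝ} (hr₀ : 0 < r₀) :
    ContinuousOn (F n r₀) (Set.Ioi r₀) := by
  intro t ht
  have h1 : (1:ℝ) < t / r₀ := (one_lt_div hr₀).2 ht
  have h2 : (1:ℝ) < (t / r₀) ^ (2 * n) := one_lt_pow₀ h1 (by omega)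
  apply ContinuousWithinAt.div continuousWithinAt_const
  · exact (Real.continuous_sqrt.comp (by continuity)).continuousWithinAt
  · exact Real.sqrt_ne_zero'.2 (by linarith)

lemma F_integrable {n : ℕ} (hn : 1 ≤ n) {r₀ b : ℝ} (hr₀ : 0 < r₀) (hb : r₀ ≤ b) :
    IntervalIntegrable (F n r₀) volume r₀ b := by
  have hg : IntervalIntegrable (fun t => Real.sqrt (r₀ / (2 * n)) * (t - r₀) ^ (-(1/2) : ℝ))
      volume r₀ b := by
    have := (intervalIntegrable_rpow' (a := 0) (b := b - r₀) (r := -(1/2))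
      (by norm_num)).comp_sub_right r₀
    simpa using this.const_mul _
  refine hg.mono_fun' ?_ ?_
  · apply Measurable.aestronglyMeasurable
    apply Measurable.div measurable_const
    exact Real.continuous_sqrt.measurable.comp
      (((measurable_id.div_const r₀).pow_const _).sub_const 1)
  · filter_upwards [ae_restrict_mem measurableSet_uIoc] with t ht
    rw [Set.uIoc_of_le hb] at ht
    have ht1 : r₀ < t := ht.1
    have hA : (2 * n / r₀) * (t - r₀) ≤ (t / r₀) ^ (2 * n) - 1 := by
      have ha : (0:ℝ) ≤ t / r₀ - 1 := by
        have := (one_lt_div hr₀).2 ht1; linarith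
      have hber : 1 + (2 * n : ℕ) * (t / r₀ - 1) ≤ (1 + (t / r₀ - 1)) ^ (2 * n) :=
        one_add_mul_le_pow (by linarith) (2 * n)
      have he : (1 : ℝ) + (t / r₀ - 1) = t / r₀ := by ring
      rw [he] at hber
      have h2 : (2 * n / r₀) * (t - r₀) = (2 * n : ℕ) * (t / r₀ - 1) := by
        push_cast; field_simp
      linarith
    have hpos : (0:ℝ) < (2 * n / r₀) * (t - r₀) := by
      have hn' : (0:ℝ) < 2 * n := by positivity
      apply mul_pos (div_pos hn' hr₀); linarith
    have hF : F n r₀ t ≤ Real.sqrt (r₀ / (2 * n)) * (t - r₀) ^ (-(1/2) : ℝ) := by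
      have h1 : Real.sqrt ((2 * n / r₀) * (t - r₀)) ≤ Real.sqrt ((t / r₀) ^ (2 * n) - 1) :=
        Real.sqrt_le_sqrt hA
      have h2 : F n r₀ t ≤ 1 / Real.sqrt ((2 * n / r₀) * (t - r₀)) :=
        one_div_le_one_div_of_le (Real.sqrt_pos.2 hpos) h1
      refine h2.trans_eq ?_
      have e1 : Real.sqrt ((2 * n / r₀) * (t - r₀))
          = Real.sqrt (2 * n / r₀) * Real.sqrt (t - r₀) := Real.sqrt_mul (by positivity) _
      have e2 : (t - r₀ : ℝ) ^ (-(1/2) : ℝ) = (Real.sqrt (t - r₀))⁻¹ := by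
        rw [Real.rpow_neg (by linarith), Real.sqrt_eq_rpow]
      have e3 : Real.sqrt (r₀ / (2 * n)) = (Real.sqrt (2 * n / r₀))⁻¹ := by
        rw [← Real.sqrt_inv, inv_div]
      rw [e1, e2, e3, one_div, mul_inv]
    have hnorm : ‖F n r₀ t‖ = F n r₀ t := by
      rw [Real.norm_eq_abs, abs_of_pos (F_pos hn hr₀ ht1)]
    rw [hnorm]; exact hF

lemma phi_hasDerivAt {n : ℕ} (hn : 1 ≤ n) {r₀ r : ℝ} (hr₀ : 0 < r₀) (hr : r₀ < r) :
    HasDerivAt (phi n r₀) (F n r₀ r) r := by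
  have : HasDerivAt (fun u => ∫ t in r₀..u, F n r₀ t) (F n r₀ r) r := by
    apply integral_hasDerivAt_right (F_integrable hn hr₀ hr.le)
    · refine StronglyMeasurable.stronglyMeasurableAtFilter ?_
      apply Measurable.stronglyMeasurable
      exact (Real.continuous_sqrt.measurable.comp
        (((measurable_id.div_const r₀).pow_const _).sub_const 1)).const_div 1
    · exact (F_cont hn hr₀).continuousAt (Ioi_mem_nhds hr)
  exact this

lemma phi_lt {n : ℕ} (hn : 1 ≤ n) {r₀ a b : ℝ} (hr₀ : 0 < r₀) (ha : r₀ < a) (hab : a < b) :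
    phi n r₀ a < phi n r₀ b := by
  have hiab : IntervalIntegrable (F n r₀) volume a b := by
    apply ContinuousOn.intervalIntegrable
    apply (F_cont hn hr₀).mono
    rw [Set.uIcc_of_le hab.le]
    exact fun t ht => lt_of_lt_of_le ha ht.1
  have hsub : phi n r₀ b - phi n r₀ a = ∫ t in a..b, F n r₀ t := by
    show (∫ t in r₀..b, F n r₀ t) - (∫ t in r₀..a, F n r₀ t) = _
    exact integral_interval_sub_left (F_integrable hn hr₀ (ha.trans hab).le)
      (F_integrable hn hr₀ ha.le)
  have hpos : 0 < ∫ t in a..b, F n r₀ t :=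
    intervalIntegral_pos_of_pos_on hiab (fun t ht => F_pos hn hr₀ (ha.trans ht.1)) hab
  linarith

lemma norm_hasFDerivAt {n : ℕ} {x : EuclideanSpace ℝ (Fin n)} (hx : x ≠ 0) :
    HasFDerivAt (fun y : EuclideanSpace ℝ (Fin n) => ‖y‖) (‖x‖⁻¹ • innerSL ℝ x) x := by
  have hx' : ‖x‖ ≠ 0 := norm_ne_zero_iff.2 hx
  have h2 : HasFDerivAt (fun y : EuclideanSpace ℝ (Fin n) => ‖y‖ ^ 2)
      (2 • innerSL ℝ x) x := (hasStrictFDerivAt_norm_sq x).hasFDerivAt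
  have hs : HasDerivAt Real.sqrt (1 / (2 * Real.sqrt (‖x‖ ^ 2))) (‖x‖ ^ 2) :=
    Real.hasDerivAt_sqrt (pow_ne_zero 2 hx')
  have hc := hs.comp_hasFDerivAt x h2
  have hfun : (fun y : EuclideanSpace ℝ (Fin n) => ‖y‖)
      = fun y => Real.sqrt (‖y‖ ^ 2) := by
    funext y; rw [Real.sqrt_sq (norm_nonneg y)]
  rw [hfun]
  convert hc using 1
  · rfl
  · rfl
  · rfl
  · rfl
  rw [Real.sqrt_sq (norm_nonneg x)]
  ext v
  simp only [ContinuousLinearMap.smul_apply, ContinuousLinearMap.coe_smul',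
    Pi.smul_apply, smul_eq_mul]
  have : (innerSL ℝ x) v = (innerSL ℝ x) v := rfl
  field_simp
  ring

lemma inner_single_real {n : ℕ} (y : EuclideanSpace ℝ (Fin n)) (i : Fin n) :
    (innerSL ℝ y) (EuclideanSpace.single i (1:ℝ)) = y i := by
  simp [EuclideanSpace.inner_single_right]

lemma sum_coord_sq {n : ℕ} (y : EuclideanSpace ℝ (Fin n)) :
    ∑ i, (y i) ^ 2 = ‖y‖ ^ 2 := by
  rw [EuclideanSpace.norm_eq, Real.sq_sqrt (by positivity)]
  simp [sq_abs]

lemma w_hasFDerivAt {n : ℕ} (hn : 1 ≤ n) {r₀ : ℝ} (hr₀ : 0 < r₀)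
    {y : EuclideanSpace ℝ (Fin n)} (hy : r₀ < ‖y‖) :
    HasFDerivAt (fun z => phi n r₀ ‖z‖ - phi n r₀ (2 * r₀))
      ((F n r₀ ‖y‖) • (‖y‖⁻¹ • innerSL ℝ y)) y := by
  have hy0 : y ≠ 0 := by
    intro h; rw [h, norm_zero] at hy; linarith
  exact ((phi_hasDerivAt hn hr₀ hy).comp_hasFDerivAt y (norm_hasFDerivAt hy0)).sub_const _

lemma w_pd {n : ℕ} (hn : 1 ≤ n) {r₀ : ℝ} (hr₀ : 0 < r₀)
    {y : EuclideanSpace ℝ (Fin n)} (hy : r₀ < ‖y‖) (i : Fin n) :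
    pd (fun z => phi n r₀ ‖z‖ - phi n r₀ (2 * r₀)) i y = F n r₀ ‖y‖ * (y i) / ‖y‖ := by
  rw [pd, (w_hasFDerivAt hn hr₀ hy).fderiv]
  simp only [ContinuousLinearMap.coe_smul', Pi.smul_apply, smul_eq_mul,
    inner_single_real]
  ring

lemma w_Wf {n : ℕ} (hn : 1 ≤ n) {r₀ : ℝ} (hr₀ : 0 < r₀)
    {y : EuclideanSpace ℝ (Fin n)} (hy : r₀ < ‖y‖) :
    Wf (fun z => phi n r₀ ‖z‖ - phi n r₀ (2 * r₀)) y
      = Real.sqrt (1 + (F n r₀ ‖y‖) ^ 2) := by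
  have hy' : ‖y‖ ≠ 0 := ne_of_gt (hr₀.trans hy)
  rw [Wf]
  congr 1
  have : ∀ i, (pd (fun z => phi n r₀ ‖z‖ - phi n r₀ (2 * r₀)) i y) ^ 2
      = (F n r₀ ‖y‖)^2 / ‖y‖^2 * (y i)^2 := by
    intro i; rw [w_pd hn hr₀ hy i]; field_simp
  rw [Finset.sum_congr rfl (fun i _ => this i), ← Finset.mul_sum, sum_coord_sq]
  field_simp

lemma ratio_eq {n : ℕ} (hn : 1 ≤ n) {r₀ : ℝ} (hr₀ : 0 < r₀)
    {y : EuclideanSpace ℝ (Fin n)} (hy : r₀ < ‖y‖) (i : Fin n) :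
    pd (fun z => phi n r₀ ‖z‖ - phi n r₀ (2 * r₀)) i y
      / Wf (fun z => phi n r₀ ‖z‖ - phi n r₀ (2 * r₀)) y
    = r₀ ^ n * (y i * (‖y‖ ^ (n + 1))⁻¹) := by
  have hy' : (0:ℝ) < ‖y‖ := hr₀.trans hy
  have h1 : (1:ℝ) < ‖y‖ / r₀ := (one_lt_div hr₀).2 hy
  have hA : (0:ℝ) < (‖y‖ / r₀) ^ (2 * n) - 1 := by
    have := one_lt_pow₀ h1 (by omega : 2 * n ≠ 0); linarith
  rw [w_pd hn hr₀ hy i, w_Wf hn hr₀ hy]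
  have hF2 : (F n r₀ ‖y‖) ^ 2 = ((‖y‖ / r₀) ^ (2 * n) - 1)⁻¹ := by
    rw [F, div_pow, one_pow, Real.sq_sqrt hA.le, one_div]
  have hW : Real.sqrt (1 + (F n r₀ ‖y‖) ^ 2)
      = (‖y‖ / r₀) ^ n / Real.sqrt ((‖y‖ / r₀) ^ (2 * n) - 1) := by
    rw [hF2]
    have hne : ((‖y‖ / r₀) ^ (2 * n) - 1) ≠ 0 := ne_of_gt hA
    have e : 1 + ((‖y‖ / r₀) ^ (2 * n) - 1)⁻¹
        = (‖y‖ / r₀) ^ (2 * n) / ((‖y‖ / r₀) ^ (2 * n) - 1) := by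
      rw [eq_div_iff hne, add_mul, inv_mul_cancel₀ hne]; ring
    rw [e, Real.sqrt_div (by positivity) _]
    congr 1
    rw [show 2 * n = n * 2 by ring, pow_mul]
    exact Real.sqrt_sq (by positivity)
  rw [hW, F]
  have hs : Real.sqrt ((‖y‖ / r₀) ^ (2 * n) - 1) ≠ 0 := by
    exact ne_of_gt (Real.sqrt_pos.2 hA)
  have hr₀' : r₀ ≠ 0 := ne_of_gt hr₀
  have hy0 : ‖y‖ ≠ 0 := ne_of_gt hy'
  rw [div_pow]
  field_simp
  have hsq : Real.sqrt (r₀ ^ (2 * n)) = r₀ ^ n := by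
    rw [mul_comm 2 n, pow_mul]; exact Real.sqrt_sq (by positivity)
  have hBpos : (0:ℝ) < ‖y‖ ^ (2 * n) - r₀ ^ (2 * n) := by
    have h := pow_lt_pow_left₀ hy hr₀.le (by omega : 2 * n ≠ 0)
    linarith
  have hB : Real.sqrt (‖y‖ ^ (2 * n) - r₀ ^ (2 * n)) ≠ 0 :=
    ne_of_gt (Real.sqrt_pos.2 hBpos)
  rw [mul_assoc, mul_assoc, mul_div_cancel_left₀ _ (Real.sqrt_pos.2 (by positivity)).ne', div_pow]
  field_simp
  ring

lemma V_pd {n : ℕ} {r₀ : ℝ} (hr₀ : 0 < r₀) {x : EuclideanSpace ℝ (Fin n)} (hx : x ≠ 0)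
    (i : Fin n) :
    pd (fun y : EuclideanSpace ℝ (Fin n) => r₀ ^ n * (y i * (‖y‖ ^ (n + 1))⁻¹)) i x
      = r₀ ^ n * (x i * (-(((n:ℝ) + 1) * ‖x‖ ^ n) / (‖x‖ ^ (n + 1)) ^ 2 * (‖x‖⁻¹ * x i))
          + (‖x‖ ^ (n + 1))⁻¹) := by
  have hr : (0:ℝ) < ‖x‖ := norm_pos_iff.2 hx
  have hproj : HasFDerivAt (fun y : EuclideanSpace ℝ (Fin n) => y i)
      (EuclideanSpace.proj (𝕜 := ℝ) i) x := by
    have h := (EuclideanSpace.proj (𝕜 := ℝ) i).hasFDerivAt (x := x)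
    convert h using 1
    rfl
  have hpow : HasDerivAt (fun t : ℝ => (t ^ (n + 1))⁻¹)
      (-(((n:ℝ) + 1) * ‖x‖ ^ n) / (‖x‖ ^ (n + 1)) ^ 2) ‖x‖ := by
    have := (hasDerivAt_pow (n + 1) ‖x‖).inv (pow_ne_zero _ (ne_of_gt hr))
    rw [Nat.add_sub_cancel, Nat.cast_add_one] at this
    exact this
  have hinv := hpow.comp_hasFDerivAt x (norm_hasFDerivAt hx)
  simp only [Function.comp_def] at hinv
  have hmul := (hproj.mul hinv).const_mul (r₀ ^ n)
  simp only [Pi.mul_apply] at hmul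
  rw [pd, hmul.fderiv]
  simp only [ContinuousLinearMap.coe_smul', Pi.smul_apply, smul_eq_mul,
    ContinuousLinearMap.add_apply, ContinuousLinearMap.smul_apply, inner_single_real]
  have : (EuclideanSpace.proj (𝕜 := ℝ) i) (EuclideanSpace.single i (1:ℝ)) = 1 := by
    simp
  rw [this]
  ring

lemma div_neg_main {n : ℕ} (hn : 1 ≤ n) {r₀ : ℝ} (hr₀ : 0 < r₀)
    {x : EuclideanSpace ℝ (Fin n)} (hx : 2 * r₀ < ‖x‖) :
    (∑ i, pd (fun y =>
        pd (fun z => phi n r₀ ‖z‖ - phi n r₀ (2 * r₀)) i y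
          / Wf (fun z => phi n r₀ ‖z‖ - phi n r₀ (2 * r₀)) y) i x) < 0 := by
  have hxr : r₀ < ‖x‖ := by linarith
  have hr : (0:ℝ) < ‖x‖ := hr₀.trans hxr
  have hx0 : x ≠ 0 := by intro h; rw [h, norm_zero] at hr; exact lt_irrefl _ hr
  have hU : IsOpen {y : EuclideanSpace ℝ (Fin n) | r₀ < ‖y‖} :=
    isOpen_lt continuous_const continuous_norm
  have hpd : ∀ i : Fin n, pd (fun y =>
      pd (fun z => phi n r₀ ‖z‖ - phi n r₀ (2 * r₀)) i y
        / Wf (fun z => phi n r₀ ‖z‖ - phi n r₀ (2 * r₀)) y) i x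
      = pd (fun y : EuclideanSpace ℝ (Fin n) => r₀ ^ n * (y i * (‖y‖ ^ (n + 1))⁻¹)) i x := by
    intro i
    have heq : (fun y => pd (fun z => phi n r₀ ‖z‖ - phi n r₀ (2 * r₀)) i y
        / Wf (fun z => phi n r₀ ‖z‖ - phi n r₀ (2 * r₀)) y)
        =ᶠ[nhds x] (fun y : EuclideanSpace ℝ (Fin n) => r₀ ^ n * (y i * (‖y‖ ^ (n + 1))⁻¹)) :=
      Filter.eventuallyEq_of_mem (hU.mem_nhds hxr) (fun y hy => ratio_eq hn hr₀ hy i)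
    rw [pd, pd, heq.fderiv_eq]
  rw [Finset.sum_congr rfl (fun i _ => hpd i),
    Finset.sum_congr rfl (fun i _ => V_pd hr₀ hx0 i)]
  have hterm : ∀ i : Fin n,
      r₀ ^ n * (x i * (-(((n:ℝ) + 1) * ‖x‖ ^ n) / (‖x‖ ^ (n + 1)) ^ 2 * (‖x‖⁻¹ * x i))
          + (‖x‖ ^ (n + 1))⁻¹)
      = r₀ ^ n * (-(((n:ℝ) + 1) * ‖x‖ ^ n) / (‖x‖ ^ (n + 1)) ^ 2 * ‖x‖⁻¹) * (x i) ^ 2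
        + r₀ ^ n * (‖x‖ ^ (n + 1))⁻¹ := by
    intro i; ring
  rw [Finset.sum_congr rfl (fun i _ => hterm i), Finset.sum_add_distrib, ← Finset.mul_sum,
    sum_coord_sq, Finset.sum_const, Finset.card_univ, Fintype.card_fin, nsmul_eq_mul]
  have hfinal : r₀ ^ n * (-(((n:ℝ) + 1) * ‖x‖ ^ n) / (‖x‖ ^ (n + 1)) ^ 2 * ‖x‖⁻¹) * ‖x‖ ^ 2
      + (n : ℝ) * (r₀ ^ n * (‖x‖ ^ (n + 1))⁻¹) = -(r₀ ^ n / ‖x‖ ^ (n + 1)) := by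
    have h1 : ‖x‖ ≠ 0 := ne_of_gt hr
    field_simp
    ring
  rw [hfinal, neg_lt_zero]
  positivity

end Helpers

/-- The catenoid-type barrier `w(x) = φ(|x|) − φ(2r₀)` is a strict supersolution
of the minimal surface equation on the annulus `2r₀ < |x| < 4r₀`, vanishes on
the inner boundary, equals `φ(4r₀) − φ(2r₀) > 0` on the outer boundary, and
is strictly between these values inside. -/
theorem catenoid_barrier (n : ℕ) (hn : 2 ≤ n) (r₀ : ℝ) (hr₀ : 0 < r₀) :
    (∀ x : EuclideanSpace ℝ (Fin n), 2 * r₀ < ‖x‖ → ‖x‖ < 4 * r₀ →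
      (∑ i, pd (fun y =>
          pd (fun z => phi n r₀ ‖z‖ - phi n r₀ (2 * r₀)) i y
            / Wf (fun z => phi n r₀ ‖z‖ - phi n r₀ (2 * r₀)) y) i x) < 0 ∧
      0 < phi n r₀ ‖x‖ - phi n r₀ (2 * r₀) ∧
      phi n r₀ ‖x‖ - phi n r₀ (2 * r₀) < phi n r₀ (4 * r₀) - phi n r₀ (2 * r₀)) ∧
    (∀ x : EuclideanSpace ℝ (Fin n), ‖x‖ = 2 * r₀ →
      phi n r₀ ‖x‖ - phi n r₀ (2 * r₀) = 0) ∧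
    (∀ x : EuclideanSpace ℝ (Fin n), ‖x‖ = 4 * r₀ →
      phi n r₀ ‖x‖ - phi n r₀ (2 * r₀) = phi n r₀ (4 * r₀) - phi n r₀ (2 * r₀)) ∧
    0 < phi n r₀ (4 * r₀) - phi n r₀ (2 * r₀) := by
  have hn1 : 1 ≤ n := by omega
  refine ⟨fun x hx2 hx4 => ⟨div_neg_main hn1 hr₀ hx2, ?_, ?_⟩, fun x h => by rw [h, sub_self],
    fun x h => by rw [h], sub_pos.2 (phi_lt hn1 hr₀ (by linarith) (by linarith))⟩
  · exact sub_pos.2 (phi_lt hn1 hr₀ (by linarith) hx2)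
  · exact sub_lt_sub_right (phi_lt hn1 hr₀ (by linarith) hx4) _
end
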